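/- (Corollary 3, case βxy·βyx > 1.) In the extended bidirectional structural model with direct instrument effects η and δ and a single confounder U = V ~ N(0, σ²) (perfect positive correlation: γ1 = 1, γ2 = 1), suppose σ > 0, βxy·βyx > 1, 1 + βxy > 0, 1 + βyx > 0, μxz ≠ η and μyw ≠ δ. Define c = 1/(1 − βxy·βyx), λ1 = σ²c²(1 + βyx)², λ2 = σ²c²(1 + βxy)², ξxz = c(μxz + βyx·η)/√λ1, ξxw = c(δ + βyx·μyw)/√λ1, ξyz = c(βxy·μxz + η)/√λ2, ξyw = c(βxy·δ + μyw)/√λ2, and the signal-to-noise ratios η0 = η/σ, δ0 = δ/σ. Then the bidirectional causal effects are identified by βyx = ((ξyz − ξxz)(ξxw + δ0)) / ((ξxw − ξyw)(ξxz + η0)) and βxy = ((ξxw − ξyw)(ξyz + η0)) / ((ξyz − ξxz)(ξyw + δ0)). -/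

import Mathlib

/-- Corollary 3, case βxy·βyx > 1: identification of the
bidirectional causal effects with a single confounder (γ1 = γ2 = 1) and
signal-to-noise reparameterized direct instrument effects. -/
theorem stmt_17 (μx0 μy0 μxz μyw η δ βxy βyx σ : ℝ)
    (hσ : 0 < σ) (hβ : 1 < βxy * βyx)
    (hβxy : 0 < 1 + βxy) (hβyx : 0 < 1 + βyx)
    (hz : μxz ≠ η) (hw : μyw ≠ δ)
    (c lam1 lam2 ξxz ξxw ξyz ξyw η0 δ0 : ℝ)
    (hc : c = 1 / (1 - βxy * βyx))
    (hlam1 : lam1 = σ ^ 2 * c ^ 2 * (1 + βyx) ^ 2)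
    (hlam2 : lam2 = σ ^ 2 * c ^ 2 * (1 + βxy) ^ 2)
    (hξxz : ξxz = c * (μxz + βyx * η) / Real.sqrt lam1)
    (hξxw : ξxw = c * (δ + βyx * μyw) / Real.sqrt lam1)
    (hξyz : ξyz = c * (βxy * μxz + η) / Real.sqrt lam2)
    (hξyw : ξyw = c * (βxy * δ + μyw) / Real.sqrt lam2)
    (hη0 : η0 = η / σ) (hδ0 : δ0 = δ / σ) :
    βyx = ((ξyz - ξxz) * (ξxw + δ0)) / ((ξxw - ξyw) * (ξxz + η0)) ∧
    βxy = ((ξxw - ξyw) * (ξyz + η0)) / ((ξyz - ξxz) * (ξyw + δ0)) := by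
  have hpne : (1 - βxy * βyx) ≠ 0 := by nlinarith
  have hcneg : c < 0 := by
    rw [hc]; exact div_neg_of_pos_of_neg one_pos (by linarith)
  have hcne : c ≠ 0 := ne_of_lt hcneg
  have hσne : σ ≠ 0 := ne_of_gt hσ
  have hbxyne : (1 + βxy) ≠ 0 := ne_of_gt hβxy
  have hbyxne : (1 + βyx) ≠ 0 := ne_of_gt hβyx
  have hzne : μxz - η ≠ 0 := sub_ne_zero.mpr hz
  have hzne' : η - μxz ≠ 0 := sub_ne_zero.mpr (Ne.symm hz)
  have hwne : μyw - δ ≠ 0 := sub_ne_zero.mpr hw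
  have hwne' : δ - μyw ≠ 0 := sub_ne_zero.mpr (Ne.symm hw)
  have hs1 : Real.sqrt lam1 = σ * (-c) * (1 + βyx) := by
    rw [hlam1, show σ ^ 2 * c ^ 2 * (1 + βyx) ^ 2 = (σ * (-c) * (1 + βyx)) ^ 2 by ring,
      Real.sqrt_sq (mul_nonneg (mul_nonneg hσ.le (neg_nonneg.mpr hcneg.le)) (by linarith))]
  have hs2 : Real.sqrt lam2 = σ * (-c) * (1 + βxy) := by
    rw [hlam2, show σ ^ 2 * c ^ 2 * (1 + βxy) ^ 2 = (σ * (-c) * (1 + βxy)) ^ 2 by ring,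
      Real.sqrt_sq (mul_nonneg (mul_nonneg hσ.le (neg_nonneg.mpr hcneg.le)) (by linarith))]
  have hA : ξyz - ξxz = ((1 - βxy * βyx) * (μxz - η)) / (σ * (1 + βxy) * (1 + βyx)) := by
    rw [hξyz, hξxz, hs1, hs2]; field_simp; ring
  have hB : ξxw + δ0 = (βyx * (δ - μyw)) / (σ * (1 + βyx)) := by
    rw [hξxw, hδ0, hs1]; field_simp; ring
  have hC : ξxw - ξyw = ((1 - βxy * βyx) * (μyw - δ)) / (σ * (1 + βxy) * (1 + βyx)) := by
    rw [hξxw, hξyw, hs1, hs2]; field_simp; ring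
  have hD : ξxz + η0 = (η - μxz) / (σ * (1 + βyx)) := by
    rw [hξxz, hη0, hs1]; field_simp; ring
  have hE : ξyz + η0 = (βxy * (η - μxz)) / (σ * (1 + βxy)) := by
    rw [hξyz, hη0, hs2]; field_simp; ring
  have hF : ξyw + δ0 = (δ - μyw) / (σ * (1 + βxy)) := by
    rw [hξyw, hδ0, hs2]; field_simp; ring
  constructor
  · rw [hA, hB, hC, hD]; have hpne' : 1 - βyx * βxy ≠ 0 := by rw [mul_comm]; exact hpne
    field_simp; ring
  · rw [hA, hC, hE, hF]; field_simp; ring
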